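/- Let p be a prime, n a natural number, and C ≤ Σ_n a subgroup of order p. Let λ be a C-invariant setoid on Fin n with ⊥ < λ < ⊤ such that C acts transitively on the set of λ-classes. Then λ has exactly p equivalence classes, and C acts freely on Fin n: no non-identity element of C fixes any point of Fin n. -/

import Mathlib

/-- Let `p` be a prime and `C ≤ Σ_n` a subgroup of order `p`.
If `λ` is a `C`-invariant setoid on `Fin n` with `⊥ < λ < ⊤` on whose classes `C`
acts transitively, then `λ` has exactly `p` classes and `C` acts freely on `Fin n`. -/
theorem stmt5 (p n : ℕ) (hp : p.Prime) (C : Subgroup (Equiv.Perm (Fin n)))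
    (hC : Nat.card C = p)
    (lam : Setoid (Fin n))
    (hinv : ∀ c ∈ C, ∀ x y : Fin n, lam.r x y → lam.r (c x) (c y))
    (hbot : ⊥ < lam) (htop : lam < ⊤)
    (htrans : ∀ x y : Fin n, ∃ c ∈ C, lam.r (c x) y) :
    Nat.card (Quotient lam) = p ∧
      ∀ c ∈ C, c ≠ 1 → ∀ x : Fin n, c x ≠ x := by
  classical
  have key : ∀ c ∈ C, c ≠ 1 → ∀ x : Fin n, ¬ lam.r (c x) x := by
    intro c hc hc1 x hrx
    let S : Subgroup (Equiv.Perm (Fin n)) :=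
      { carrier := {d | d ∈ C ∧ lam.r (d x) x}
        one_mem' := ⟨one_mem _, by simpa using lam.refl x⟩
        mul_mem' := by
          rintro a b ⟨ha, hax⟩ ⟨hb, hbx⟩
          refine ⟨mul_mem ha hb, ?_⟩
          have h2 := hinv a ha _ _ hbx
          exact lam.trans (by simpa using h2) hax
        inv_mem' := by
          rintro a ⟨ha, hax⟩
          refine ⟨inv_mem ha, ?_⟩
          have h2 := hinv a⁻¹ (inv_mem ha) _ _ hax
          simp only [Equiv.Perm.inv_def, Equiv.symm_apply_apply] at h2
          exact lam.symm h2 }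
    have hSC : S ≤ C := fun d hd => hd.1
    have hcS : c ∈ S := ⟨hc, hrx⟩
    have hdvd : Nat.card S ∣ p := hC ▸ Subgroup.card_dvd_of_le hSC
    have hne1 : Nat.card S ≠ 1 := by
      intro h
      rw [Subgroup.card_eq_one] at h
      exact hc1 (by simpa [h] using hcS)
    have hcard : Nat.card S = p := ((Nat.Prime.eq_one_or_self_of_dvd hp _ hdvd).resolve_left hne1)
    have hSeq : S = C := Subgroup.eq_of_le_of_card_ge hSC ((hC.trans hcard.symm).le)
    have hall : ∀ d ∈ C, lam.r (d x) x := fun d hd => (show d ∈ S from hSeq ▸ hd).2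
    have hle : (⊤ : Setoid (Fin n)) ≤ lam := by
      rw [Setoid.le_def]
      intro a b _
      obtain ⟨d, hd, hda⟩ := htrans x a
      obtain ⟨e, he, heb⟩ := htrans x b
      exact lam.trans (lam.trans (lam.symm hda) (hall d hd))
        (lam.trans (lam.symm (hall e he)) heb)
    exact htop.2 hle
  have hfree : ∀ c ∈ C, c ≠ 1 → ∀ x : Fin n, c x ≠ x := by
    intro c hc hc1 x h
    exact key c hc hc1 x (by rw [h])
  refine ⟨?_, hfree⟩
  -- get a point of Fin n
  have hne : ∃ a b : Fin n, ¬ lam.r a b := by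
    by_contra h
    push_neg at h
    exact htop.ne (le_antisymm le_top (fun x y _ => h x y))
  obtain ⟨a, b, hab⟩ := hne
  have hbij : Function.Bijective (fun d : C => (⟦(d : Equiv.Perm (Fin n)) a⟧ : Quotient lam)) := by
    constructor
    · rintro ⟨d, hd⟩ ⟨e, he⟩ h
      have hrel : lam.r (d a) (e a) := Quotient.exact h
      have h2 := hinv e⁻¹ (inv_mem he) _ _ hrel
      simp only [Equiv.Perm.inv_def, Equiv.symm_apply_apply] at h2
      by_contra hne'
      have hne'' : e⁻¹ * d ≠ 1 := by
        intro h1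
        have hed : d = e := by
          have h3 := congrArg (e * ·) h1
          simpa [mul_assoc] using h3
        exact hne' (Subtype.ext hed)
      exact key (e⁻¹ * d) (mul_mem (inv_mem he) hd) hne'' a
        (by simpa [Equiv.Perm.mul_apply] using h2)
    · intro q
      induction q using Quotient.inductionOn with
      | h y =>
        obtain ⟨d, hd, hda⟩ := htrans a y
        exact ⟨⟨d, hd⟩, Quotient.sound hda⟩
  rw [← Nat.card_eq_of_bijective _ hbij, hC]
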